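/- Commuting conversion is computed by the μμ̃ machine: the translation of (case(c, x₁.λy.t₁, x₂.λy.t₂)) u, applied against any context α, reduces in finitely many steps to ⟨⟦c⟧ | μ̃[inj₁ x₁.⟨⟦t₁[u/y]⟧ | α⟩ | inj₂ x₂.⟨⟦t₂[u/y]⟧ | α⟩]⟩. -/
import Mathlib


mutual
/-- μμ̃ machine terms. -/
inductive MTm where
  | var : Nat → MTm
  | mu : MMach → MTm            -- μα.m, binds co-variable 0
  | muPair : MMach → MTm        -- μ(x·α).m, binds variable 0 and co-variable 0
  | injl : MTm → MTm
  | injr : MTm → MTm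
/-- μμ̃ machine co-terms (contexts). -/
inductive MCo where
  | covar : Nat → MCo
  | cons : MTm → MCo → MCo      -- t·e
  | mutilde : MMach → MCo       -- μ̃x.m, binds variable 0
  | case : MMach → MMach → MCo  -- μ̃[inj₁x₁.m₁ | inj₂x₂.m₂], each branch binds variable 0
/-- μμ̃ machine configurations ⟨t | e⟩. -/
inductive MMach where
  | conf : MTm → MCo → MMach
end

/-- Lift a renaming under a binder. -/
def liftN (f : Nat → Nat) : Nat → Nat
  | 0 => 0
  | n + 1 => f n + 1

mutual
/-- Simultaneous renaming of variables (ft) and co-variables (fc). -/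
def MTm.rename (ft fc : Nat → Nat) : MTm → MTm
  | .var n => .var (ft n)
  | .mu m => .mu (MMach.rename ft (liftN fc) m)
  | .muPair m => .muPair (MMach.rename (liftN ft) (liftN fc) m)
  | .injl t => .injl (MTm.rename ft fc t)
  | .injr t => .injr (MTm.rename ft fc t)
def MCo.rename (ft fc : Nat → Nat) : MCo → MCo
  | .covar n => .covar (fc n)
  | .cons t e => .cons (MTm.rename ft fc t) (MCo.rename ft fc e)
  | .mutilde m => .mutilde (MMach.rename (liftN ft) fc m)
  | .case m₁ m₂ => .case (MMach.rename (liftN ft) fc m₁) (MMach.rename (liftN ft) fc m₂)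
def MMach.rename (ft fc : Nat → Nat) : MMach → MMach
  | .conf t e => .conf (MTm.rename ft fc t) (MCo.rename ft fc e)
end

/-- Lift a substitution under a variable binder. -/
def upT (σt : Nat → MTm) (σc : Nat → MCo) : (Nat → MTm) × (Nat → MCo) :=
  (fun n => match n with
    | 0 => .var 0
    | n + 1 => MTm.rename Nat.succ id (σt n),
   fun n => MCo.rename Nat.succ id (σc n))

/-- Lift a substitution under a co-variable binder. -/
def upC (σt : Nat → MTm) (σc : Nat → MCo) : (Nat → MTm) × (Nat → MCo) :=
  (fun n => MTm.rename id Nat.succ (σt n),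
   fun n => match n with
    | 0 => .covar 0
    | n + 1 => MCo.rename id Nat.succ (σc n))

mutual
/-- Simultaneous substitution of terms for variables and co-terms for co-variables. -/
def MTm.subst (σt : Nat → MTm) (σc : Nat → MCo) : MTm → MTm
  | .var n => σt n
  | .mu m => .mu (MMach.subst (upC σt σc).1 (upC σt σc).2 m)
  | .muPair m =>
      .muPair (MMach.subst (upT (upC σt σc).1 (upC σt σc).2).1
                           (upT (upC σt σc).1 (upC σt σc).2).2 m)
  | .injl t => .injl (MTm.subst σt σc t)
  | .injr t => .injr (MTm.subst σt σc t)
def MCo.subst (σt : Nat → MTm) (σc : Nat → MCo) : MCo → MCo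
  | .covar n => σc n
  | .cons t e => .cons (MTm.subst σt σc t) (MCo.subst σt σc e)
  | .mutilde m => .mutilde (MMach.subst (upT σt σc).1 (upT σt σc).2 m)
  | .case m₁ m₂ => .case (MMach.subst (upT σt σc).1 (upT σt σc).2 m₁)
                         (MMach.subst (upT σt σc).1 (upT σt σc).2 m₂)
def MMach.subst (σt : Nat → MTm) (σc : Nat → MCo) : MMach → MMach
  | .conf t e => .conf (MTm.subst σt σc t) (MCo.subst σt σc e)
end

/-- m[e/α] : substitute co-term `e` for co-variable 0. -/
def MMach.substCo (m : MMach) (e : MCo) : MMach :=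
  MMach.subst MTm.var (fun n => match n with | 0 => e | n + 1 => .covar n) m

/-- m[t/x] : substitute term `t` for variable 0. -/
def MMach.substTm (m : MMach) (t : MTm) : MMach :=
  MMach.subst (fun n => match n with | 0 => t | n + 1 => .var n) MCo.covar m

/-- m[t/x, e/α] : substitute both a term and a co-term. -/
def MMach.substTmCo (m : MMach) (t : MTm) (e : MCo) : MMach :=
  MMach.subst (fun n => match n with | 0 => t | n + 1 => .var n)
              (fun n => match n with | 0 => e | n + 1 => .covar n) m

mutual
/-- Reduction of μμ̃ terms (congruence). -/
inductive StepT : MTm → MTm → Prop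
  | mu {m m'} : StepM m m' → StepT (.mu m) (.mu m')
  | muPair {m m'} : StepM m m' → StepT (.muPair m) (.muPair m')
  | injl {t t'} : StepT t t' → StepT (.injl t) (.injl t')
  | injr {t t'} : StepT t t' → StepT (.injr t) (.injr t')
/-- Reduction of μμ̃ co-terms (congruence). -/
inductive StepC : MCo → MCo → Prop
  | consl {t t'} (e) : StepT t t' → StepC (.cons t e) (.cons t' e)
  | consr (t) {e e'} : StepC e e' → StepC (.cons t e) (.cons t e')
  | mutilde {m m'} : StepM m m' → StepC (.mutilde m) (.mutilde m')
  | casel {m₁ m₁'} (m₂) : StepM m₁ m₁' → StepC (.case m₁ m₂) (.case m₁' m₂)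
  | caser (m₁) {m₂ m₂'} : StepM m₂ m₂' → StepC (.case m₁ m₂) (.case m₁ m₂')
/-- Reduction of μμ̃ machine configurations. -/
inductive StepM : MMach → MMach → Prop
  | mu (m : MMach) (e : MCo) : StepM (.conf (.mu m) e) (m.substCo e)
  | mutilde (t : MTm) (m : MMach) : StepM (.conf t (.mutilde m)) (m.substTm t)
  | muPair (m : MMach) (u : MTm) (e : MCo) :
      StepM (.conf (.muPair m) (.cons u e)) (m.substTmCo u e)
  | casel (t : MTm) (m₁ m₂ : MMach) :
      StepM (.conf (.injl t) (.case m₁ m₂)) (m₁.substTm t)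
  | caser (t : MTm) (m₁ m₂ : MMach) :
      StepM (.conf (.injr t) (.case m₁ m₂)) (m₂.substTm t)
  | congT {t t'} (e) : StepT t t' → StepM (.conf t e) (.conf t' e)
  | congC (t) {e e'} : StepC e e' → StepM (.conf t e) (.conf t e')
end

/-- Source λ-calculus with sums (de Bruijn). In `case t u₁ u₂` each branch binds
variable 0. -/
inductive LTm where
  | var : Nat → LTm
  | lam : LTm → LTm
  | app : LTm → LTm → LTm
  | injl : LTm → LTm
  | injr : LTm → LTm
  | case : LTm → LTm → LTm → LTm

/-- Compilation of λ-terms with sums into the μμ̃ machine (call-by-name). -/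
def transl : LTm → MTm
  | .var n => .var n
  | .lam t => .muPair (.conf (transl t) (.covar 0))
  | .app t u => .mu (.conf (transl t) (.cons (transl u) (.covar 0)))
  | .injl t => .injl (transl t)
  | .injr t => .injr (transl t)
  | .case t u₁ u₂ =>
      .mu (.conf (transl t)
        (.case (.conf (transl u₁) (.covar 0)) (.conf (transl u₂) (.covar 0))))

/-- Shift free λ-variables ≥ d by one. -/
def LTm.shift (d : Nat) : LTm → LTm
  | .var n => if n < d then .var n else .var (n + 1)
  | .lam t => .lam (LTm.shift (d + 1) t)
  | .app t u => .app (LTm.shift d t) (LTm.shift d u)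
  | .injl t => .injl (LTm.shift d t)
  | .injr t => .injr (LTm.shift d t)
  | .case t u₁ u₂ =>
      .case (LTm.shift d t) (LTm.shift (d + 1) u₁) (LTm.shift (d + 1) u₂)

/-- Substitute `u` for λ-variable `k`. -/
def LTm.subst (k : Nat) (u : LTm) : LTm → LTm
  | .var n => if n < k then .var n else if n = k then u else .var (n - 1)
  | .lam t => .lam (LTm.subst (k + 1) (LTm.shift 0 u) t)
  | .app t v => .app (LTm.subst k u t) (LTm.subst k u v)
  | .injl t => .injl (LTm.subst k u t)
  | .injr t => .injr (LTm.subst k u t)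
  | .case t v₁ v₂ =>
      .case (LTm.subst k u t) (LTm.subst (k + 1) (LTm.shift 0 u) v₁)
            (LTm.subst (k + 1) (LTm.shift 0 u) v₂)

/-- Renaming a translated λ-term only uses the term renaming (no free co-vars),
and shift-like renamings compute `LTm.shift`. -/
lemma rename_transl (s : LTm) : ∀ (d : Nat) (ft fc : Nat → Nat),
    (∀ n, ft n = if n < d then n else n + 1) →
    MTm.rename ft fc (transl s) = transl (LTm.shift d s) := by
  induction s with
  | var n =>
      intro d ft fc h
      simp only [transl, MTm.rename, LTm.shift, h]
      split <;> simp [transl]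
  | lam t ih =>
      intro d ft fc h
      simp only [transl, MTm.rename, LTm.shift, MMach.rename, MCo.rename]
      rw [ih (d+1) (liftN ft) (liftN fc)]
      · simp [liftN]
      · intro n
        cases n with
        | zero => simp [liftN]
        | succ n => simp only [liftN, h]; split <;> split <;> omega
  | app t u iht ihu =>
      intro d ft fc h
      simp only [transl, MTm.rename, LTm.shift, MMach.rename, MCo.rename]
      rw [iht d ft (liftN fc) h, ihu d ft (liftN fc) h]
      simp [liftN]
  | injl t ih =>
      intro d ft fc h
      simp only [transl, MTm.rename, LTm.shift]
      rw [ih d ft fc h]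
  | injr t ih =>
      intro d ft fc h
      simp only [transl, MTm.rename, LTm.shift]
      rw [ih d ft fc h]
  | case t u₁ u₂ iht ih₁ ih₂ =>
      intro d ft fc h
      simp only [transl, MTm.rename, LTm.shift, MMach.rename, MCo.rename]
      rw [iht d ft (liftN fc) h,
          ih₁ (d+1) (liftN ft) (liftN fc), ih₂ (d+1) (liftN ft) (liftN fc)]
      · simp [liftN]
      all_goals
        intro n
        cases n with
        | zero => simp [liftN]
        | succ n => simp only [liftN, h]; split <;> split <;> omega

/-- Identity-like renamings fix translated λ-terms. -/
lemma rename_id_transl (s : LTm) : ∀ (ft fc : Nat → Nat),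
    (∀ n, ft n = n) → MTm.rename ft fc (transl s) = transl s := by
  induction s with
  | var n => intro ft fc h; simp [transl, MTm.rename, h]
  | lam t ih =>
      intro ft fc h
      simp only [transl, MTm.rename, MMach.rename, MCo.rename]
      rw [ih (liftN ft) (liftN fc)]
      · simp [liftN]
      · intro n; cases n <;> simp [liftN, h]
  | app t u iht ihu =>
      intro ft fc h
      simp only [transl, MTm.rename, MMach.rename, MCo.rename]
      rw [iht ft (liftN fc) h, ihu ft (liftN fc) h]
      simp [liftN]
  | injl t ih => intro ft fc h; simp only [transl, MTm.rename]; rw [ih ft fc h]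
  | injr t ih => intro ft fc h; simp only [transl, MTm.rename]; rw [ih ft fc h]
  | case t u₁ u₂ iht ih₁ ih₂ =>
      intro ft fc h
      simp only [transl, MTm.rename, MMach.rename, MCo.rename]
      rw [iht ft (liftN fc) h, ih₁ (liftN ft) (liftN fc),
          ih₂ (liftN ft) (liftN fc)]
      · simp [liftN]
      all_goals intro n; cases n <;> simp [liftN, h]

/-- Variable-like substitutions are preserved by `upC`. -/
lemma var_upC {σt : Nat → MTm} {σc : Nat → MCo} (h : ∀ n, σt n = .var n) :
    ∀ n, (upC σt σc).1 n = .var n := by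
  intro n; simp [upC, h, MTm.rename]

/-- Variable-like substitutions are preserved by `upT`. -/
lemma var_upT {σt : Nat → MTm} {σc : Nat → MCo} (h : ∀ n, σt n = .var n) :
    ∀ n, (upT σt σc).1 n = .var n := by
  intro n; cases n <;> simp [upT, h, MTm.rename]

/-- Identity-like substitutions fix translated λ-terms (no free co-vars). -/
lemma subst_id_transl (s : LTm) : ∀ (σt : Nat → MTm) (σc : Nat → MCo),
    (∀ n, σt n = .var n) → MTm.subst σt σc (transl s) = transl s := by
  induction s with
  | var n => intro σt σc h; simp [transl, MTm.subst, h]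
  | lam t ih =>
      intro σt σc h
      simp only [transl, MTm.subst, MMach.subst, MCo.subst]
      rw [ih _ _ (var_upT (var_upC h))]
      simp [upT, upC, MCo.rename]
  | app t u iht ihu =>
      intro σt σc h
      simp only [transl, MTm.subst, MMach.subst, MCo.subst]
      rw [iht _ _ (var_upC h), ihu _ _ (var_upC h)]
      simp [upC]
  | injl t ih => intro σt σc h; simp only [transl, MTm.subst]; rw [ih _ _ h]
  | injr t ih => intro σt σc h; simp only [transl, MTm.subst]; rw [ih _ _ h]
  | case t u₁ u₂ iht ih₁ ih₂ =>
      intro σt σc h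
      simp only [transl, MTm.subst, MMach.subst, MCo.subst]
      rw [iht _ _ (var_upC h), ih₁ _ _ (var_upT (var_upC h)),
          ih₂ _ _ (var_upT (var_upC h))]
      simp [upT, upC, MCo.rename]

/-- `LTm.subst`-like substitutions are preserved by `upC`. -/
lemma sub_upC {σt : Nat → MTm} {σc : Nat → MCo} {k : Nat} {v : LTm}
    (h : ∀ n, σt n = if n < k then .var n else if n = k then transl v else .var (n - 1)) :
    ∀ n, (upC σt σc).1 n
      = if n < k then .var n else if n = k then transl v else .var (n - 1) := by
  intro n
  simp only [upC, h]
  split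
  · rfl
  · split
    · exact rename_id_transl v id Nat.succ (fun _ => rfl)
    · rfl

/-- `LTm.subst`-like substitutions are lifted by `upT`. -/
lemma sub_upT {σt : Nat → MTm} {σc : Nat → MCo} {k : Nat} {v : LTm}
    (h : ∀ n, σt n = if n < k then .var n else if n = k then transl v else .var (n - 1)) :
    ∀ n, (upT σt σc).1 n
      = if n < k + 1 then .var n
        else if n = k + 1 then transl (LTm.shift 0 v) else .var (n - 1) := by
  intro n
  cases n with
  | zero => simp [upT]
  | succ n =>
      simp only [upT, h]
      split
      · rename_i h1
        rw [if_pos (by omega)]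
        simp [MTm.rename]
      · split
        · rename_i h1 h2
          rw [if_neg (by omega), if_pos (by omega)]
          exact rename_transl v 0 Nat.succ id (fun n => by simp)
        · rename_i h1 h2
          rw [if_neg (by omega), if_neg (by omega)]
          simp only [MTm.rename]
          congr 1
          omega

/-- Substitutions matching `LTm.subst k v` on variables compute `LTm.subst` on
translations. -/
lemma subst_transl (s : LTm) : ∀ (k : Nat) (v : LTm) (σt : Nat → MTm) (σc : Nat → MCo),
    (∀ n, σt n = if n < k then .var n else if n = k then transl v else .var (n - 1)) →
    MTm.subst σt σc (transl s) = transl (LTm.subst k v s) := by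
  induction s with
  | var n =>
      intro k v σt σc h
      simp only [transl, MTm.subst, LTm.subst, h]
      split
      · simp [transl]
      · split
        · rfl
        · simp [transl]
  | lam t ih =>
      intro k v σt σc h
      simp only [transl, MTm.subst, MMach.subst, MCo.subst, LTm.subst]
      rw [ih (k+1) (LTm.shift 0 v) _ _ (sub_upT (sub_upC h))]
      simp [upT, upC, MCo.rename]
  | app t u iht ihu =>
      intro k v σt σc h
      simp only [transl, MTm.subst, MMach.subst, MCo.subst, LTm.subst]
      rw [iht k v _ _ (sub_upC h), ihu k v _ _ (sub_upC h)]
      simp [upC]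
  | injl t ih =>
      intro k v σt σc h
      simp only [transl, MTm.subst, LTm.subst]; rw [ih k v _ _ h]
  | injr t ih =>
      intro k v σt σc h
      simp only [transl, MTm.subst, LTm.subst]; rw [ih k v _ _ h]
  | case t u₁ u₂ iht ih₁ ih₂ =>
      intro k v σt σc h
      simp only [transl, MTm.subst, MMach.subst, MCo.subst, LTm.subst]
      rw [iht k v _ _ (sub_upC h),
          ih₁ (k+1) (LTm.shift 0 v) _ _ (sub_upT (sub_upC h)),
          ih₂ (k+1) (LTm.shift 0 v) _ _ (sub_upT (sub_upC h))]
      simp [upT, upC, MCo.rename]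

/-- Commuting conversion is computed by the μμ̃ machine: the translation of
(case(c, x₁.λy.t₁, x₂.λy.t₂)) u against a co-variable α reduces in finitely
many steps to ⟨⟦c⟧ | μ̃[inj₁ x₁.⟨⟦t₁[u/y]⟧ | α⟩ | inj₂ x₂.⟨⟦t₂[u/y]⟧ | α⟩]⟩. -/
theorem commuting_conversion (c t₁ t₂ u : LTm) (k : Nat) :
    Relation.ReflTransGen StepM
      (.conf (transl (.app (.case c (.lam t₁) (.lam t₂)) u)) (.covar k))
      (.conf (transl c)
        (.case (.conf (transl (LTm.subst 0 (LTm.shift 0 u) t₁)) (.covar k))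
               (.conf (transl (LTm.subst 0 (LTm.shift 0 u) t₂)) (.covar k)))) := by
  have s1 : StepM (.conf (transl (.app (.case c (.lam t₁) (.lam t₂)) u)) (.covar k))
      (.conf (transl (.case c (.lam t₁) (.lam t₂))) (.cons (transl u) (.covar k))) := by
    have h := StepM.mu (.conf (transl (.case c (.lam t₁) (.lam t₂)))
      (.cons (transl u) (.covar 0))) (.covar k)
    have e : (MMach.conf (transl (.case c (.lam t₁) (.lam t₂)))
        (.cons (transl u) (.covar 0))).substCo (.covar k)
        = .conf (transl (.case c (.lam t₁) (.lam t₂))) (.cons (transl u) (.covar k)) := by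
      simp only [MMach.substCo, MMach.subst, MCo.subst]
      rw [subst_id_transl _ _ _ (fun n => rfl), subst_id_transl _ _ _ (fun n => rfl)]
    rw [e] at h
    exact h
  have s2 : StepM (.conf (transl (.case c (.lam t₁) (.lam t₂))) (.cons (transl u) (.covar k)))
      (.conf (transl c)
        (.case (.conf (transl (.lam t₁)) (.cons (transl (LTm.shift 0 u)) (.covar k)))
               (.conf (transl (.lam t₂)) (.cons (transl (LTm.shift 0 u)) (.covar k))))) := by
    have h := StepM.mu (.conf (transl c)
        (.case (.conf (transl (.lam t₁)) (.covar 0)) (.conf (transl (.lam t₂)) (.covar 0))))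
      (.cons (transl u) (.covar k))
    have e : (MMach.conf (transl c)
        (.case (.conf (transl (.lam t₁)) (.covar 0))
               (.conf (transl (.lam t₂)) (.covar 0)))).substCo (.cons (transl u) (.covar k))
        = .conf (transl c)
        (.case (.conf (transl (.lam t₁)) (.cons (transl (LTm.shift 0 u)) (.covar k)))
               (.conf (transl (.lam t₂)) (.cons (transl (LTm.shift 0 u)) (.covar k)))) := by
      simp only [MMach.substCo, MMach.subst, MCo.subst]
      rw [subst_id_transl _ _ _ (fun n => rfl),
          subst_id_transl _ _ _ (var_upT (fun n => rfl)),
          subst_id_transl _ _ _ (var_upT (fun n => rfl))]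
      simp only [upT, MCo.rename]
      rw [rename_transl u 0 Nat.succ id (fun n => by simp)]
      simp
    rw [e] at h
    exact h
  have branch : ∀ t : LTm,
      StepM (.conf (transl (.lam t)) (.cons (transl (LTm.shift 0 u)) (.covar k)))
        (.conf (transl (LTm.subst 0 (LTm.shift 0 u) t)) (.covar k)) := by
    intro t
    have h := StepM.muPair (.conf (transl t) (.covar 0)) (transl (LTm.shift 0 u)) (.covar k)
    have e : (MMach.conf (transl t) (.covar 0)).substTmCo (transl (LTm.shift 0 u)) (.covar k)
        = .conf (transl (LTm.subst 0 (LTm.shift 0 u) t)) (.covar k) := by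
      simp only [MMach.substTmCo, MMach.subst, MCo.subst]
      rw [subst_transl t 0 (LTm.shift 0 u)]
      intro n
      cases n <;> simp
    rw [e] at h
    exact h
  have s3 := StepM.congC (transl c)
    (StepC.casel (.conf (transl (.lam t₂)) (.cons (transl (LTm.shift 0 u)) (.covar k)))
      (branch t₁))
  have s4 := StepM.congC (transl c)
    (StepC.caser (.conf (transl (LTm.subst 0 (LTm.shift 0 u) t₁)) (.covar k))
      (branch t₂))
  exact .head s1 (.head s2 (.head s3 (.head s4 .refl)))
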